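/- Suppose there exists c₂ > 1 with c₂ m_ν(y) ≤ m_ν(x) for every x ∈ T and y ∈ s(x). Then for every α > 0 there exists a constant C_α, depending only on α and c₂, such that Σ_{x ∈ T_v} m_ν(x)^{1+α} ≤ C_α m_ν(v)^{1+α} for every v ∈ T. -/
import Mathlib


open MeasureTheory
open scoped ENNReal NNReal

/-- The punctured boundary `∂T` of the tree: maps `ω : ℤ → T` with `lev (ω j) = j`
and `par (ω j) = ω (j+1)`. -/
def PBoundary {T : Type*} (par : T → T) (lev : T → ℤ) : Type _ :=
  {ω : ℤ → T // (∀ j : ℤ, lev (ω j) = j) ∧ ∀ j : ℤ, par (ω j) = ω (j + 1)}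

/-- The boundary sector `∂T_x`. -/
def sector {T : Type*} (par : T → T) (lev : T → ℤ) (x : T) : Set (PBoundary par lev) :=
  {ω : PBoundary par lev | ω.1 (lev x) = x}

/-- The σ-algebra on `∂T` generated by the sectors. -/
instance {T : Type*} (par : T → T) (lev : T → ℤ) : MeasurableSpace (PBoundary par lev) :=
  MeasurableSpace.generateFrom (Set.range (sector par lev))

/-- The flow measure `m_ν x = ν (∂T_x)` (as a real number). -/
noncomputable def mnu {T : Type*} (par : T → T) (lev : T → ℤ)
    (ν : Measure (PBoundary par lev)) (x : T) : ℝ :=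
  (ν (sector par lev x)).toReal

/-- The sector `T_x = {y ∈ T : y lies below x}`. -/
def tsector {T : Type*} (par : T → T) (x : T) : Set T :=
  {y : T | ∃ n : ℕ, par^[n] y = x}

universe u

section Aux
variable {T : Type*} (par : T → T) (lev : T → ℤ)

lemma lev_iter (hlev : ∀ x : T, lev (par x) = lev x + 1) (n : ℕ) (x : T) :
    lev (par^[n] x) = lev x + n := by
  induction n with
  | zero => simp
  | succ n ih =>
    rw [Function.iterate_succ_apply', hlev, ih]
    push_cast; ring

lemma omega_iter (ω : PBoundary par lev) (n : ℕ) (j : ℤ) :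
    ω.1 (j + n) = par^[n] (ω.1 j) := by
  induction n with
  | zero => simp
  | succ n ih =>
    rw [Function.iterate_succ_apply', ← ih, ω.2.2 (j + n)]
    congr 1; push_cast; ring

lemma sector_subset (hlev : ∀ x : T, lev (par x) = lev x + 1) {x v : T} {n : ℕ}
    (h : par^[n] x = v) : sector par lev x ⊆ sector par lev v := by
  intro ω hω
  have h1 : lev v = lev x + n := by rw [← h, lev_iter par lev hlev]
  have h2 := omega_iter par lev ω n (lev x)
  simp only [sector, Set.mem_setOf_eq] at hω ⊢
  rw [h1, h2, hω, h]

lemma sector_disjoint {x y : T} (hl : lev x = lev y) (hxy : x ≠ y) :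
    Disjoint (sector par lev x) (sector par lev y) := by
  rw [Set.disjoint_left]
  intro ω hx hy
  exact hxy (by rw [← hx, hl, hy])

end Aux

/-- If `c₂ m_ν(y) ≤ m_ν(x)` for every `y ∈ s(x)` with `c₂ > 1`, then for
every `α > 0` there is `C_α` (depending only on `α` and `c₂`) with
`Σ_{x ∈ T_v} m_ν(x)^{1+α} ≤ C_α m_ν(v)^{1+α}` for every `v ∈ T`. -/
theorem stmt17 (c₂ : ℝ) (hc₂ : 1 < c₂) (α : ℝ) (hα : 0 < α) :
    ∃ C : ℝ, 0 < C ∧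
      ∀ (T : Type u) (par : T → T) (lev : T → ℤ),
        Nonempty T →
        (∀ x : T, lev (par x) = lev x + 1) →
        (∀ x : T, {y : T | par y = x}.Finite) →
        (∀ x : T, ∃ y : T, par y = x) →
        (∀ x y : T, ∃ n m : ℕ, par^[n] x = par^[m] y) →
        ∀ ν : Measure (PBoundary par lev),
          (∀ x : T, 0 < ν (sector par lev x) ∧ ν (sector par lev x) < ⊤) →
          (∀ x y : T, par y = x → c₂ * mnu par lev ν y ≤ mnu par lev ν x) →
          ∀ v : T,
            ∑' x : tsector par v, ENNReal.ofReal (mnu par lev ν x.1 ^ (1 + α))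
              ≤ ENNReal.ofReal (C * mnu par lev ν v ^ (1 + α)) := by
  have hc0 : (0:ℝ) < c₂ := lt_trans one_pos hc₂
  have hci : (0:ℝ) < c₂⁻¹ := inv_pos.mpr hc0
  set r : ℝ := c₂⁻¹ ^ α with hrdef
  have hr0 : 0 < r := Real.rpow_pos_of_pos hci α
  have hr1 : r < 1 := Real.rpow_lt_one hci.le (inv_lt_one_of_one_lt₀ hc₂) hα
  refine ⟨(1 - r)⁻¹, inv_pos.mpr (by linarith), ?_⟩
  intro T par lev _ hlev _ _ _ ν hν hstep v
  set m : T → ℝ := mnu par lev ν with hmdef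
  have hmpos : ∀ x, 0 < m x := fun x => ENNReal.toReal_pos (hν x).1.ne' (hν x).2.ne
  -- chain bound
  have chain : ∀ (n : ℕ) (x : T), c₂ ^ n * m x ≤ m (par^[n] x) := by
    intro n
    induction n with
    | zero => simp
    | succ n ih =>
      intro x
      rw [Function.iterate_succ_apply']
      calc c₂ ^ (n+1) * m x = c₂ * (c₂ ^ n * m x) := by ring
        _ ≤ c₂ * m (par^[n] x) := mul_le_mul_of_nonneg_left (ih x) hc0.le
        _ ≤ m (par (par^[n] x)) := hstep _ _ rfl
  -- per-level sum bound
  have level_sum : ∀ (n : ℕ) (G : Finset T), (∀ x ∈ G, par^[n] x = v) →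
      ∑ x ∈ G, m x ≤ m v := by
    intro n G hG
    have hmeas : ∀ x : T, MeasurableSet (sector par lev x) := fun x =>
      MeasurableSpace.measurableSet_generateFrom (Set.mem_range_self x)
    have hdisj : (G : Set T).PairwiseDisjoint (fun x => sector par lev x) := by
      intro x hx y hy hxy
      apply sector_disjoint
      · have hx' := lev_iter par lev hlev n x
        have hy' := lev_iter par lev hlev n y
        rw [hG x hx] at hx'; rw [hG y hy] at hy'
        omega
      · exact hxy
    have key : ∑ x ∈ G, ν (sector par lev x) ≤ ν (sector par lev v) := by
      rw [← measure_biUnion_finset hdisj (fun x _ => hmeas x)]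
      exact measure_mono (Set.iUnion₂_subset fun x hx => sector_subset par lev hlev (hG x hx))
    calc ∑ x ∈ G, m x = (∑ x ∈ G, ν (sector par lev x)).toReal := by
          rw [ENNReal.toReal_sum (fun x _ => (hν x).2.ne)]; rfl
      _ ≤ (ν (sector par lev v)).toReal := ENNReal.toReal_mono (hν v).2.ne key
      _ = m v := rfl
  classical
  -- depth function
  have hdepth : ∀ x : tsector par v, par^[(lev v - lev x.1).toNat] x.1 = v := by
    intro x
    obtain ⟨n, hn⟩ := x.2
    have h1 : lev v = lev x.1 + n := by
      have := lev_iter par lev hlev n x.1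
      rw [hn] at this; omega
    have h2 : (lev v - lev x.1).toNat = n := by omega
    rw [h2, hn]
  set d : tsector par v → ℕ := fun x => (lev v - lev x.1).toNat with hddef
  -- pointwise bound
  have pt : ∀ x : tsector par v, m x.1 ^ (1 + α) ≤ m v ^ α * r ^ (d x) * m x.1 := by
    intro x
    have hiter := chain (d x) x.1
    rw [hdepth x] at hiter
    have hle : m x.1 ≤ c₂⁻¹ ^ (d x) * m v := by
      rw [inv_pow, ← div_eq_inv_mul, le_div_iff₀ (pow_pos hc0 _)]
      linarith [hiter]
    have hpow : (c₂⁻¹ ^ (d x) * m v) ^ α = r ^ (d x) * m v ^ α := by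
      rw [Real.mul_rpow (pow_nonneg hci.le _) (hmpos v).le,
        ← Real.rpow_natCast c₂⁻¹ (d x), ← Real.rpow_mul hci.le, mul_comm (d x : ℝ) α,
        Real.rpow_mul hci.le, Real.rpow_natCast]
    have h1 : m x.1 ^ α ≤ r ^ (d x) * m v ^ α := by
      rw [← hpow]
      exact Real.rpow_le_rpow (hmpos x.1).le hle hα.le
    calc m x.1 ^ (1 + α) = m x.1 * m x.1 ^ α := by
          rw [Real.rpow_add (hmpos x.1), Real.rpow_one]
      _ ≤ m x.1 * (r ^ (d x) * m v ^ α) :=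
          mul_le_mul_of_nonneg_left h1 (hmpos x.1).le
      _ = m v ^ α * r ^ (d x) * m x.1 := by ring
  -- finite sum bound
  have main : ∀ F : Finset (tsector par v),
      ∑ x ∈ F, m x.1 ^ (1 + α) ≤ (1 - r)⁻¹ * m v ^ (1 + α) := by
    intro F
    have hmaps : ∀ x ∈ F, d x ∈ F.image d := fun x hx => Finset.mem_image_of_mem d hx
    rw [← Finset.sum_fiberwise_of_maps_to hmaps (fun x => m x.1 ^ (1 + α))]
    have inner : ∀ n ∈ F.image d,
        ∑ x ∈ F.filter (fun x => d x = n), m x.1 ^ (1 + α) ≤ m v ^ α * r ^ n * m v := by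
      intro n _
      calc ∑ x ∈ F.filter (fun x => d x = n), m x.1 ^ (1 + α)
          ≤ ∑ x ∈ F.filter (fun x => d x = n), m v ^ α * r ^ n * m x.1 := by
            apply Finset.sum_le_sum
            intro x hx
            have := pt x
            rw [(Finset.mem_filter.mp hx).2] at this
            exact this
        _ = m v ^ α * r ^ n * ∑ x ∈ F.filter (fun x => d x = n), m x.1 := by
            rw [Finset.mul_sum]
        _ ≤ m v ^ α * r ^ n * m v := by
            apply mul_le_mul_of_nonneg_left _
              (mul_nonneg (Real.rpow_nonneg (hmpos v).le α) (pow_nonneg hr0.le n))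
            have := level_sum n (((F.filter (fun x => d x = n)).image Subtype.val))
              (by
                intro y hy
                obtain ⟨x, hx, rfl⟩ := Finset.mem_image.mp hy
                have hdx : d x = n := (Finset.mem_filter.mp hx).2
                rw [← hdx]; exact hdepth x)
            rwa [Finset.sum_image (fun x _ y _ h => Subtype.ext h)] at this
    calc ∑ n ∈ F.image d, ∑ x ∈ F.filter (fun x => d x = n), m x.1 ^ (1 + α)
        ≤ ∑ n ∈ F.image d, m v ^ α * r ^ n * m v := Finset.sum_le_sum inner
      _ = (m v ^ α * m v) * ∑ n ∈ F.image d, r ^ n := by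
          rw [Finset.mul_sum]; apply Finset.sum_congr rfl; intro n _; ring
      _ ≤ (m v ^ α * m v) * (1 - r)⁻¹ := by
          apply mul_le_mul_of_nonneg_left _
            (mul_nonneg (Real.rpow_nonneg (hmpos v).le α) (hmpos v).le)
          have hs := Summable.sum_le_tsum (F.image d) (fun n _ => (pow_pos hr0 n).le)
            (summable_geometric_of_lt_one hr0.le hr1)
          rwa [tsum_geometric_of_lt_one hr0.le hr1] at hs
      _ = (1 - r)⁻¹ * m v ^ (1 + α) := by
          rw [Real.rpow_add (hmpos v), Real.rpow_one]; ring
  rw [ENNReal.tsum_eq_iSup_sum]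
  apply iSup_le
  intro F
  rw [← ENNReal.ofReal_sum_of_nonneg (fun x _ => Real.rpow_nonneg (hmpos x.1).le _)]
  exact ENNReal.ofReal_le_ofReal (main F)
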